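/- Let G be in (Δ+1)-reduced form with respect to a (Δ+1)-colouring. If G has a (Δ+1)-locked path P, then each endvertex of P is an endvertex of a (Δ+1)-locked path of length 3. -/

import Mathlib

/-- A vertex `v` is locked (w.r.t. a (Δ+1)-colouring `γ`): Δ distinct colours
appear on the neighbours of `v`. -/
def Locked {V : Type} [Fintype V] [DecidableEq V] (G : SimpleGraph V)
    [DecidableRel G.Adj] {Δ : ℕ} (γ : V → Fin (Δ + 1)) (v : V) : Prop :=
  Δ ≤ ((Finset.univ.filter (G.Adj v)).image γ).card

section Aux

variable {V : Type} [Fintype V] [DecidableEq V] (G : SimpleGraph V)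
  [DecidableRel G.Adj] {Δ : ℕ}

open Finset

lemma card_nbhd_le (hmax : G.maxDegree = Δ) (x : V) :
    (Finset.univ.filter (G.Adj x)).card ≤ Δ := by
  rw [← SimpleGraph.neighborFinset_eq_filter]
  exact hmax ▸ G.degree_le_maxDegree x

/-- A locked vertex has at most one neighbour of each colour. -/
lemma locked_uniq (hmax : G.maxDegree = Δ) (γ : V → Fin (Δ + 1)) {x y₁ y₂ : V}
    (hx : Locked G γ x) (h1 : G.Adj x y₁) (h2 : G.Adj x y₂) (hc : γ y₁ = γ y₂) :
    y₁ = y₂ := by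
  by_contra hne
  set N := Finset.univ.filter (G.Adj x) with hN
  have h1' : y₁ ∈ N := by simp [hN, h1]
  have h2' : y₂ ∈ N := by simp [hN, h2]
  have hsub : N.image γ ⊆ (N.erase y₁).image γ := by
    intro c hc'
    obtain ⟨z, hz, rfl⟩ := Finset.mem_image.mp hc'
    rcases eq_or_ne z y₁ with rfl | hz1
    · exact Finset.mem_image.mpr ⟨y₂, Finset.mem_erase.mpr ⟨Ne.symm hne, h2'⟩, hc.symm⟩
    · exact Finset.mem_image.mpr ⟨z, Finset.mem_erase.mpr ⟨hz1, hz⟩, rfl⟩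
  have : Δ ≤ (N.erase y₁).card :=
    le_trans hx (le_trans (Finset.card_le_card hsub) (Finset.card_image_le))
  have hlt : (N.erase y₁).card < N.card := Finset.card_erase_lt_of_mem h1'
  have hle : N.card ≤ Δ := by rw [hN]; exact card_nbhd_le G hmax x
  omega

/-- A locked vertex has a neighbour of every colour other than its own. -/
lemma locked_exists (hmax : G.maxDegree = Δ) (γ : V → Fin (Δ + 1))
    (hproper : ∀ u v, G.Adj u v → γ u ≠ γ v) {x : V}
    (hx : Locked G γ x) {c : Fin (Δ + 1)} (hc : c ≠ γ x) :
    ∃ y, G.Adj x y ∧ γ y = c := by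
  set S := (Finset.univ.filter (G.Adj x)).image γ with hS
  have hsub : S ⊆ Finset.univ.erase (γ x) := by
    intro d hd
    obtain ⟨z, hz, rfl⟩ := Finset.mem_image.mp hd
    simp only [Finset.mem_filter] at hz
    exact Finset.mem_erase.mpr ⟨(hproper x z hz.2).symm, Finset.mem_univ _⟩
  have hcard : (Finset.univ.erase (γ x)).card ≤ S.card := by
    rw [Finset.card_erase_of_mem (Finset.mem_univ _)]
    simpa [Locked, hS] using hx
  have heq : S = Finset.univ.erase (γ x) :=
    Finset.eq_of_subset_of_card_le hsub hcard
  have : c ∈ S := heq ▸ Finset.mem_erase.mpr ⟨hc, Finset.mem_univ _⟩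
  obtain ⟨y, hy, hyc⟩ := Finset.mem_image.mp this
  simp only [Finset.mem_filter] at hy
  exact ⟨y, hy.2, hyc⟩

lemma inner_aux (hmax : G.maxDegree = Δ) (γ : V → Fin (Δ + 1))
    (hproper : ∀ u v, G.Adj u v → γ u ≠ γ v) {u v : V}
    (hu : γ u = Fin.last Δ) (hv : γ v = Fin.last Δ) :
    ∀ {y v' : V} (W : G.Walk y v'), γ v' = Fin.last Δ → G.Adj u y → u ∉ W.support →
      (∀ w ∈ W.support, Locked G γ w) →
      ∃ a b, G.Adj u a ∧ G.Adj a b ∧ Locked G γ a ∧ Locked G γ b ∧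
        b ≠ u ∧ ¬ G.Adj u b := by
  intro y v' W
  induction W with
  | @nil y =>
      intro hv' hadj _ _
      exact absurd (hu.trans hv'.symm) (hproper u y hadj)
  | @cons y z v' h W ih =>
      intro hv' hadj hns hlk
      by_cases hz : G.Adj u z
      · refine ih hv' hz ?_ ?_
        · intro hmem; exact hns (by simp [SimpleGraph.Walk.support_cons, hmem])
        · intro w hw; exact hlk w (by simp [SimpleGraph.Walk.support_cons, hw])
      · refine ⟨y, z, hadj, h, hlk y (SimpleGraph.Walk.start_mem_support _), ?_, ?_, hz⟩
        · exact hlk z (by simp [SimpleGraph.Walk.support_cons,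
            SimpleGraph.Walk.start_mem_support])
        · rintro rfl
          apply hns
          rw [SimpleGraph.Walk.support_cons]
          exact List.mem_cons_of_mem _ W.start_mem_support

lemma one_side (hmax : G.maxDegree = Δ) (γ : V → Fin (Δ + 1))
    (hproper : ∀ u v, G.Adj u v → γ u ≠ γ v)
    (hreduced : ∀ v, γ v = Fin.last Δ →
        Locked G γ v ∧ ∀ u, G.Adj v u → Locked G γ u)
    {u v : V} (huv : u ≠ v) (P : G.Walk u v) (hP : P.IsPath)
    (hu : γ u = Fin.last Δ) (hv : γ v = Fin.last Δ)
    (hlocked : ∀ w ∈ P.support, Locked G γ w) :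
    ∃ (w : V) (Q : G.Walk u w), Q.IsPath ∧ Q.length = 3 ∧ γ w = Fin.last Δ ∧
        ∀ x ∈ Q.support, Locked G γ x := by
  obtain ⟨a, b, hua, hab, hla, hlb, hbu, hnub⟩ : ∃ a b, G.Adj u a ∧ G.Adj a b ∧
      Locked G γ a ∧ Locked G γ b ∧ b ≠ u ∧ ¬ G.Adj u b := by
    cases P with
    | nil => exact absurd rfl huv
    | cons h W =>
        have hP' := (SimpleGraph.Walk.cons_isPath_iff _ _).mp hP
        exact inner_aux G hmax γ hproper hu hv W hv h hP'.2
          (fun w hw => hlocked w (by simp [SimpleGraph.Walk.support_cons, hw]))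
  -- colours of a and b are not `last`
  have hga : γ a ≠ Fin.last Δ := fun hc => hproper u a hua (hu.trans hc.symm)
  have hgb : γ b ≠ Fin.last Δ := by
    intro hc
    exact hbu (locked_uniq G hmax γ hla hab hua.symm (hc.trans hu.symm))
  -- b has a neighbour coloured last
  obtain ⟨w, hbw, hw⟩ := locked_exists G hmax γ hproper hlb (Ne.symm hgb)
  have hwu : w ≠ u := fun hc => hnub ((hc ▸ hbw).symm)
  have hwa : w ≠ a := fun hc => hga (hc ▸ hw)
  refine ⟨w, SimpleGraph.Walk.cons hua (SimpleGraph.Walk.cons hab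
    (SimpleGraph.Walk.cons hbw SimpleGraph.Walk.nil)), ?_, rfl, hw, ?_⟩
  · rw [SimpleGraph.Walk.isPath_def]
    simp only [SimpleGraph.Walk.support_cons, SimpleGraph.Walk.support_nil]
    refine List.nodup_cons.mpr ⟨?_, List.nodup_cons.mpr ⟨?_, List.nodup_cons.mpr ⟨?_, List.nodup_singleton _⟩⟩⟩
    · simp only [List.mem_cons, List.mem_singleton]
      rintro (rfl | rfl | rfl | h)
      · exact G.irrefl hua
      · exact hbu rfl
      · exact hwu rfl
      · exact absurd h List.not_mem_nil
    · simp only [List.mem_cons, List.mem_singleton]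
      rintro (rfl | rfl | h)
      · exact G.irrefl hab
      · exact hwa rfl
      · exact absurd h List.not_mem_nil
    · simp only [List.mem_singleton]
      rintro rfl
      exact G.irrefl hbw
  · intro x hx
    simp only [SimpleGraph.Walk.support_cons, SimpleGraph.Walk.support_nil,
      List.mem_cons, List.mem_singleton] at hx
    rcases hx with rfl | rfl | rfl | rfl | h
    · exact hlocked x (SimpleGraph.Walk.start_mem_support _)
    · exact hla
    · exact hlb
    · exact (hreduced x hw).1
    · exact absurd h List.not_mem_nil

end Aux

/-- If G is in (Δ+1)-reduced form and has a (Δ+1)-locked path P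
(endvertices coloured Δ+1 and every vertex on the path locked), then each
endvertex of P is an endvertex of a (Δ+1)-locked path of length 3. -/
theorem locked_path_length_three {V : Type} [Fintype V] [DecidableEq V]
    (G : SimpleGraph V) [DecidableRel G.Adj] (Δ : ℕ) (hmax : G.maxDegree = Δ)
    (γ : V → Fin (Δ + 1))
    (hproper : ∀ u v, G.Adj u v → γ u ≠ γ v)
    (hreduced : ∀ v, γ v = Fin.last Δ →
        Locked G γ v ∧ ∀ u, G.Adj v u → Locked G γ u)
    (u v : V) (huv : u ≠ v) (P : G.Walk u v) (hP : P.IsPath)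
    (hu : γ u = Fin.last Δ) (hv : γ v = Fin.last Δ)
    (hlocked : ∀ w ∈ P.support, Locked G γ w) :
    (∃ (w : V) (Q : G.Walk u w), Q.IsPath ∧ Q.length = 3 ∧ γ w = Fin.last Δ ∧
        ∀ x ∈ Q.support, Locked G γ x) ∧
    (∃ (w : V) (Q : G.Walk v w), Q.IsPath ∧ Q.length = 3 ∧ γ w = Fin.last Δ ∧
        ∀ x ∈ Q.support, Locked G γ x) := by
  constructor
  · exact one_side G hmax γ hproper hreduced huv P hP hu hv hlocked
  · exact one_side G hmax γ hproper hreduced huv.symm P.reverse hP.reverse hv hu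
      (fun w hw => hlocked w (by rwa [SimpleGraph.Walk.support_reverse, List.mem_reverse] at hw))
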